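/- For 3 ≤ r ≤ 2k, the even cycle C_{2r} is C_{2k+1}-mixing: any two homomorphisms from C_{2r} to C_{2k+1} can be connected by a sequence of single-vertex recolourings through homomorphisms. -/

import Mathlib

/-- A homomorphism of graphs given by adjacency relations. -/
def IsHom {A B : Type*} (AdjG : A → A → Prop) (AdjH : B → B → Prop) (f : A → B) : Prop :=
  ∀ u v : A, AdjG u v → AdjH (f u) (f v)

/-- Adjacency on the cycle `C_n` with vertex set `ZMod n`: `i ~ j` iff `j = i ± 1`. -/
def CycAdj (n : ℕ) (i j : ZMod n) : Prop := j = i + 1 ∨ i = j + 1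

/-- One step of reconfiguration: both maps are homomorphisms and they differ in exactly
one vertex. -/
def Step {A B : Type*} (AdjG : A → A → Prop) (AdjH : B → B → Prop) (f g : A → B) : Prop :=
  IsHom AdjG AdjH f ∧ IsHom AdjG AdjH g ∧ ∃ v : A, f v ≠ g v ∧ ∀ u : A, u ≠ v → f u = g u

/-- `F : ZMod (2r) → ℤ` changes by exactly `±1` along each edge of the cycle. -/
def IsStepF (r : ℕ) (F : ZMod (2*r) → ℤ) : Prop :=
  ∀ i : ZMod (2*r), F (i+1) - F i = 1 ∨ F (i+1) - F i = -1

/-- Projection of an integer map to `ZMod (2k+1)`. -/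
def projF (r k : ℕ) (F : ZMod (2*r) → ℤ) : ZMod (2*r) → ZMod (2*k+1) :=
  fun i => ((F i : ℤ) : ZMod (2*k+1))

lemma hom_of_step {r k : ℕ} {F : ZMod (2*r) → ℤ} (hF : IsStepF r F) :
    IsHom (CycAdj (2*r)) (CycAdj (2*k+1)) (projF r k F) := by
  have key : ∀ a b : ZMod (2*r), b = a + 1 → CycAdj (2*k+1) (projF r k F a) (projF r k F b) := by
    intro a b hb; subst hb
    rcases hF a with h | h
    · left
      show ((F (a+1) : ℤ) : ZMod (2*k+1)) = ((F a : ℤ) : ZMod (2*k+1)) + 1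
      have h2 : F (a+1) = F a + 1 := by omega
      rw [h2]; push_cast; ring
    · right
      show ((F a : ℤ) : ZMod (2*k+1)) = ((F (a+1) : ℤ) : ZMod (2*k+1)) + 1
      have h2 : F a = F (a+1) + 1 := by omega
      rw [h2]; push_cast; ring
  intro u v huv
  rcases huv with h | h
  · exact key u v h
  · rcases key v u h with h1 | h1
    · exact Or.inr h1
    · exact Or.inl h1

lemma step_flip {r k : ℕ} (hr : 3 ≤ r) (hk : 2 ≤ k) {F : ZMod (2*r) → ℤ}
    (hF : IsStepF r F) (v : ZMod (2*r)) (hv : F (v+1) = F (v-1)) :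
    IsStepF r (Function.update F v (2 * F (v+1) - F v)) ∧
    Step (CycAdj (2*r)) (CycAdj (2*k+1)) (projF r k F)
      (projF r k (Function.update F v (2 * F (v+1) - F v))) := by
  haveI : NeZero (2*r) := ⟨by omega⟩
  have hone : (1 : ZMod (2*r)) ≠ 0 := by
    haveI : Fact (1 < 2*r) := ⟨by omega⟩
    exact one_ne_zero
  set F' := Function.update F v (2 * F (v+1) - F v) with hF'def
  have hself : F' v = 2 * F (v+1) - F v := Function.update_self _ _ _
  have hneq : ∀ u, u ≠ v → F' u = F u := fun u hu => Function.update_of_ne hu _ _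
  have hsucc : v + 1 ≠ v := fun h => hone (add_eq_left.mp h)
  have hstepF' : IsStepF r F' := by
    intro i
    by_cases hi : i = v
    · subst hi
      rw [hneq _ hsucc, hself]
      rcases hF i with h | h <;> omega
    · by_cases hi1 : i + 1 = v
      · have hiv : i = v - 1 := eq_sub_of_add_eq hi1
        rw [hi1, hself, hneq _ hi, hiv, ← hv]
        rcases hF v with h | h <;> omega
      · rw [hneq _ hi1, hneq _ hi]
        exact hF i
  refine ⟨hstepF', hom_of_step hF, hom_of_step hstepF', v, ?_, ?_⟩
  · intro hEq
    have h2 : ((2 * (F (v+1) - F v) : ℤ) : ZMod (2*k+1)) = 0 := by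
      have h3 : ((F v : ℤ) : ZMod (2*k+1)) = ((2 * F (v+1) - F v : ℤ) : ZMod (2*k+1)) := by
        simpa [projF, hself] using hEq
      push_cast at h3 ⊢
      linear_combination -h3
    have h3 := (ZMod.intCast_zmod_eq_zero_iff_dvd _ _).mp h2
    have h4 : ((2*k+1 : ℕ) : ℤ) ∣ 2 := by
      rcases hF v with h | h <;> rw [h] at h3
      · simpa using h3
      · have h5 : ((2*k+1 : ℕ) : ℤ) ∣ -2 := by simpa using h3
        exact (dvd_neg).mp h5
    have h5 := Int.le_of_dvd (by norm_num) h4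
    have h6 : ((2*k+1 : ℕ) : ℤ) = 2*(k:ℤ)+1 := by push_cast; ring
    rw [h6] at h5
    have h7 : (2:ℤ) ≤ k := by exact_mod_cast hk
    omega
  · intro u hu
    simp [projF, hneq u hu]

lemma connect {r k : ℕ} [NeZero (2*r)] (hr : 3 ≤ r) (hk : 2 ≤ k) :
    ∀ (N : ℕ) (F T : ZMod (2*r) → ℤ), IsStepF r F → IsStepF r T →
    (∀ i, (2:ℤ) ∣ (F i - T i)) →
    (∑ i, (F i - T i).natAbs) = N →
    Relation.ReflTransGen (Step (CycAdj (2*r)) (CycAdj (2*k+1))) (projF r k F) (projF r k T) := by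
  haveI : Nonempty (ZMod (2*r)) := ⟨0⟩
  intro N
  induction N using Nat.strong_induction_on with
  | _ N ih =>
    intro F T hF hT hpar hsum
    by_cases hFT : F = T
    · subst hFT; exact Relation.ReflTransGen.refl
    obtain ⟨j, hj⟩ := Function.ne_iff.mp hFT
    have hstepL : ∀ (G : ZMod (2*r) → ℤ), IsStepF r G → ∀ v : ZMod (2*r),
        G (v-1) - G v = 1 ∨ G (v-1) - G v = -1 := by
      intro G hG v
      have h := hG (v-1)
      rw [sub_add_cancel] at h
      omega
    obtain ⟨v₁, -, hv₁⟩ := Finset.exists_max_image Finset.univ (fun i => F i - T i)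
      Finset.univ_nonempty
    by_cases hpos : 0 < F v₁ - T v₁
    · -- flip a maximum down
      obtain ⟨v, hvS, hvmax⟩ := Finset.exists_max_image
        (Finset.univ.filter (fun i => F i - T i = F v₁ - T v₁)) F
        ⟨v₁, by simp⟩
      have hDv : F v - T v = F v₁ - T v₁ := (Finset.mem_filter.mp hvS).2
      have key : ∀ u, (F u - F v = 1 ∨ F u - F v = -1) →
          (T u - T v = 1 ∨ T u - T v = -1) → F u = F v - 1 := by
        intro u hFu hTu
        by_cases hu : F u - T u = F v₁ - T v₁
        · have hle : F u ≤ F v := hvmax u (by simp [hu])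
          rcases hFu with h | h <;> omega
        · have h1 : F u - T u ≤ F v₁ - T v₁ := hv₁ u (Finset.mem_univ u)
          have h2 := hpar u
          have h3 := hpar v
          rcases hFu with h | h <;> rcases hTu with h' | h' <;> omega
      have h1 : F (v+1) = F v - 1 := by
        have ha := hF v
        have hb := hT v
        exact key (v+1) (by omega) (by omega)
      have h2 : F (v-1) = F v - 1 := key (v-1) (hstepL F hF v) (hstepL T hT v)
      have hvv : F (v+1) = F (v-1) := by omega
      obtain ⟨hF', hstep⟩ := step_flip (k := k) hr hk hF v hvv
      set F2 := Function.update F v (2 * F (v+1) - F v) with hF2def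
      have hF2v : F2 v = F v - 2 := by rw [hF2def, Function.update_self]; omega
      have hF2u : ∀ u, u ≠ v → F2 u = F u := fun u hu => Function.update_of_ne hu _ _
      have hMx2 : 2 ≤ F v - T v := by have := hpar v; omega
      have e1 : ∑ i, (F2 i - T i).natAbs
          = (F2 v - T v).natAbs + ∑ i ∈ Finset.univ.erase v, (F2 i - T i).natAbs :=
        (Finset.add_sum_erase _ _ (Finset.mem_univ v)).symm
      have e2 : ∑ i, (F i - T i).natAbs
          = (F v - T v).natAbs + ∑ i ∈ Finset.univ.erase v, (F i - T i).natAbs :=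
        (Finset.add_sum_erase _ _ (Finset.mem_univ v)).symm
      have e3 : ∑ i ∈ Finset.univ.erase v, (F2 i - T i).natAbs
          = ∑ i ∈ Finset.univ.erase v, (F i - T i).natAbs :=
        Finset.sum_congr rfl (fun i hi => by rw [hF2u i (Finset.ne_of_mem_erase hi)])
      rw [e3] at e1
      have hsum2 : ∑ i, (F2 i - T i).natAbs = N - 2 ∧ 2 ≤ N := by
        rw [e1, hF2v]
        rw [e2] at hsum
        omega
      have hpar2 : ∀ i, (2:ℤ) ∣ (F2 i - T i) := by
        intro i
        by_cases hi : i = v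
        · subst hi; rw [hF2v]; have := hpar i; omega
        · rw [hF2u i hi]; exact hpar i
      exact Relation.ReflTransGen.head hstep
        (ih (N-2) (by omega) F2 T hF' hT hpar2 hsum2.1)
    · -- flip a minimum up
      obtain ⟨v₂, -, hv₂⟩ := Finset.exists_min_image Finset.univ (fun i => F i - T i)
        Finset.univ_nonempty
      have hvneg : F v₂ - T v₂ < 0 := by
        have ha := hv₂ j (Finset.mem_univ j)
        have hb := hv₁ j (Finset.mem_univ j)
        have : F j - T j ≠ 0 := fun h => hj (by omega)
        omega
      obtain ⟨v, hvS, hvmin⟩ := Finset.exists_min_image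
        (Finset.univ.filter (fun i => F i - T i = F v₂ - T v₂)) F
        ⟨v₂, by simp⟩
      have hDv : F v - T v = F v₂ - T v₂ := (Finset.mem_filter.mp hvS).2
      have key : ∀ u, (F u - F v = 1 ∨ F u - F v = -1) →
          (T u - T v = 1 ∨ T u - T v = -1) → F u = F v + 1 := by
        intro u hFu hTu
        by_cases hu : F u - T u = F v₂ - T v₂
        · have hle : F v ≤ F u := hvmin u (by simp [hu])
          rcases hFu with h | h <;> omega
        · have h1 : F v₂ - T v₂ ≤ F u - T u := hv₂ u (Finset.mem_univ u)
          have h2 := hpar u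
          have h3 := hpar v
          rcases hFu with h | h <;> rcases hTu with h' | h' <;> omega
      have h1 : F (v+1) = F v + 1 := by
        have ha := hF v
        have hb := hT v
        exact key (v+1) (by omega) (by omega)
      have h2 : F (v-1) = F v + 1 := key (v-1) (hstepL F hF v) (hstepL T hT v)
      have hvv : F (v+1) = F (v-1) := by omega
      obtain ⟨hF', hstep⟩ := step_flip (k := k) hr hk hF v hvv
      set F2 := Function.update F v (2 * F (v+1) - F v) with hF2def
      have hF2v : F2 v = F v + 2 := by rw [hF2def, Function.update_self]; omega
      have hF2u : ∀ u, u ≠ v → F2 u = F u := fun u hu => Function.update_of_ne hu _ _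
      have hMx2 : F v - T v ≤ -2 := by have := hpar v; omega
      have e1 : ∑ i, (F2 i - T i).natAbs
          = (F2 v - T v).natAbs + ∑ i ∈ Finset.univ.erase v, (F2 i - T i).natAbs :=
        (Finset.add_sum_erase _ _ (Finset.mem_univ v)).symm
      have e2 : ∑ i, (F i - T i).natAbs
          = (F v - T v).natAbs + ∑ i ∈ Finset.univ.erase v, (F i - T i).natAbs :=
        (Finset.add_sum_erase _ _ (Finset.mem_univ v)).symm
      have e3 : ∑ i ∈ Finset.univ.erase v, (F2 i - T i).natAbs
          = ∑ i ∈ Finset.univ.erase v, (F i - T i).natAbs :=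
        Finset.sum_congr rfl (fun i hi => by rw [hF2u i (Finset.ne_of_mem_erase hi)])
      rw [e3] at e1
      have hsum2 : ∑ i, (F2 i - T i).natAbs = N - 2 ∧ 2 ≤ N := by
        rw [e1, hF2v]
        rw [e2] at hsum
        omega
      have hpar2 : ∀ i, (2:ℤ) ∣ (F2 i - T i) := by
        intro i
        by_cases hi : i = v
        · subst hi; rw [hF2v]; have := hpar i; omega
        · rw [hF2u i hi]; exact hpar i
      exact Relation.ReflTransGen.head hstep
        (ih (N-2) (by omega) F2 T hF' hT hpar2 hsum2.1)

/-- The canonical zigzag. -/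
def Zig (r : ℕ) : ZMod (2*r) → ℤ := fun i => ((i.val % 2 : ℕ) : ℤ)

lemma zig_step (r : ℕ) (hr : 3 ≤ r) : IsStepF r (Zig r) := by
  haveI : NeZero (2*r) := ⟨by omega⟩
  intro i
  have h1 : ((1 : ZMod (2*r))).val = 1 := by
    have h := ZMod.val_natCast (n := 2*r) 1
    rw [Nat.mod_eq_of_lt (by omega : 1 < 2*r)] at h
    simpa using h
  have h2 : (i+1).val = (i.val + 1) % (2*r) := by rw [ZMod.val_add, h1]
  have h3 : (i+1).val % 2 = (i.val + 1) % 2 := by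
    rw [h2, Nat.mod_mod_of_dvd _ ⟨r, rfl⟩]
  unfold Zig
  omega

lemma zig_par (r : ℕ) (i : ZMod (2*r)) : (2:ℤ) ∣ (Zig r i - (i.val : ℤ)) := by
  unfold Zig
  omega

lemma lift_exists {r k : ℕ} (hr : 3 ≤ r) (hrk : r ≤ 2*k)
    (f : ZMod (2*r) → ZMod (2*k+1)) (hf : IsHom (CycAdj (2*r)) (CycAdj (2*k+1)) f) :
    ∃ F : ZMod (2*r) → ℤ, IsStepF r F ∧ projF r k F = f ∧
      ∀ i : ZMod (2*r), (2:ℤ) ∣ (F i - F 0 - (i.val : ℤ)) := by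
  haveI : NeZero (2*r) := ⟨by omega⟩
  haveI : NeZero (2*k+1) := ⟨by omega⟩
  set d : ℕ → ℤ := fun n => if f ((n : ZMod (2*r)) + 1) = f (n : ZMod (2*r)) + 1 then 1 else -1
    with hd_def
  set F0 : ℕ → ℤ := fun n => Nat.rec (((f 0).val : ℤ)) (fun m ihm => ihm + d m) n with hF0_def
  have hF0succ : ∀ n, F0 (n+1) = F0 n + d n := fun n => rfl
  have hd : ∀ n, d n = 1 ∨ d n = -1 := by
    intro n
    by_cases h : f ((n : ZMod (2*r)) + 1) = f (n : ZMod (2*r)) + 1 <;> simp [hd_def, h]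
  have hadj : ∀ n : ℕ, f ((n:ZMod (2*r)) + 1) = f n + 1 ∨ f n = f ((n : ZMod (2*r))+1) + 1 :=
    fun n => hf _ _ (Or.inl rfl)
  have hcast : ∀ n : ℕ, ((F0 n : ℤ) : ZMod (2*k+1)) = f (n : ZMod (2*r)) := by
    intro n
    induction n with
    | zero =>
      show (((((f 0).val : ℕ) : ℤ)) : ZMod (2*k+1)) = f ((0:ℕ) : ZMod (2*r))
      rw [Nat.cast_zero]
      push_cast
      simp [ZMod.natCast_val, ZMod.cast_id]
    | succ n ihn =>
      have hcs : ((n+1 : ℕ) : ZMod (2*r)) = (n : ZMod (2*r)) + 1 := by push_cast; ring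
      rw [hF0succ, hcs]
      by_cases h : f ((n : ZMod (2*r)) + 1) = f (n : ZMod (2*r)) + 1
      · have hdn : d n = 1 := by simp [hd_def, h]
        rw [hdn, h]
        push_cast
        rw [ihn]
      · have hdn : d n = -1 := by simp [hd_def, h]
        have h2 : f ((n : ZMod (2*r)) + 1) = f (n : ZMod (2*r)) - 1 := by
          rcases hadj n with h' | h'
          · exact absurd h' h
          · rw [h']; ring
        rw [hdn, h2]
        push_cast
        rw [ihn]
        ring
  have hbd : ∀ n : ℕ, (F0 n - F0 0).natAbs ≤ n ∧ (2:ℤ) ∣ (F0 n - F0 0 - n) := by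
    intro n
    induction n with
    | zero => constructor <;> simp
    | succ n ihn =>
      obtain ⟨ih1, ih2⟩ := ihn
      rcases hd n with h | h <;> rw [hF0succ, h] <;> exact ⟨by omega, by omega⟩
  have e1 := hcast (2*r)
  rw [ZMod.natCast_self] at e1
  have e2 := hcast 0
  rw [Nat.cast_zero] at e2
  have hz1 : ((F0 (2*r) - F0 0 : ℤ) : ZMod (2*k+1)) = 0 := by
    push_cast
    rw [e1, e2]
    ring
  obtain ⟨t, ht⟩ := (ZMod.intCast_zmod_eq_zero_iff_dvd _ _).mp hz1
  have ht2 : (2:ℤ) ∣ t := by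
    have h2 := (hbd (2*r)).2
    have h3 : (2:ℤ) ∣ ((2*k+1 : ℕ) : ℤ) * t := by rw [← ht]; push_cast at h2 ⊢; omega
    rcases (Int.prime_two.dvd_mul.mp h3) with h4 | h4
    · exfalso; push_cast at h4; omega
    · exact h4
  obtain ⟨u, hu⟩ := ht2
  have hb1 := (hbd (2*r)).1
  have hu0 : u = 0 := by
    rw [hu] at ht
    have hcst : ((2*k+1 : ℕ) : ℤ) = 2*(k:ℤ)+1 := by push_cast; ring
    rw [hcst] at ht
    have hrk' : (r:ℤ) ≤ 2*k := by exact_mod_cast hrk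
    rcases lt_trichotomy u 0 with h | h | h
    · exfalso
      have hb : (2*(k:ℤ)+1) * (2*u) ≤ (2*(k:ℤ)+1) * (-2) :=
        mul_le_mul_of_nonneg_left (by omega) (by positivity)
      have hP : F0 (2*r) - F0 0 ≤ -4*(k:ℤ)-2 := by linarith
      omega
    · exact h
    · exfalso
      have hb : (2*(k:ℤ)+1) * 2 ≤ (2*(k:ℤ)+1) * (2*u) :=
        mul_le_mul_of_nonneg_left (by omega) (by positivity)
      have hP : 4*(k:ℤ)+2 ≤ F0 (2*r) - F0 0 := by linarith
      omega
  have hzero : F0 (2*r) = F0 0 := by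
    rw [hu0] at hu
    rw [hu] at ht
    simp at ht
    omega
  refine ⟨fun i => F0 i.val, ?_, ?_, ?_⟩
  · intro i
    show F0 (i+1).val - F0 i.val = 1 ∨ F0 (i+1).val - F0 i.val = -1
    have hv : i.val < 2*r := ZMod.val_lt i
    have h1 : ((1 : ZMod (2*r))).val = 1 := by
      have h := ZMod.val_natCast (n := 2*r) 1
      rw [Nat.mod_eq_of_lt (by omega : 1 < 2*r)] at h
      simpa using h
    have h2 : (i+1).val = (i.val + 1) % (2*r) := by rw [ZMod.val_add, h1]
    have hkey : F0 (i+1).val = F0 i.val + d i.val := by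
      by_cases hc : i.val + 1 < 2*r
      · rw [h2, Nat.mod_eq_of_lt hc, hF0succ]
      · have hc2 : i.val + 1 = 2*r := by omega
        rw [h2, hc2, Nat.mod_self]
        show F0 0 = F0 i.val + d i.val
        have h5 : F0 (2*r) = F0 (i.val + 1) := by rw [hc2]
        rw [← hzero, h5, hF0succ]
    rw [hkey]
    rcases hd i.val with h | h <;> omega
  · funext i
    show ((F0 i.val : ℤ) : ZMod (2*k+1)) = f i
    rw [hcast i.val]
    congr 1
    simp [ZMod.natCast_val, ZMod.cast_id]
  · intro i
    have h0 : ((0 : ZMod (2*r))).val = 0 := ZMod.val_zero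
    show (2:ℤ) ∣ (F0 i.val - F0 ((0 : ZMod (2*r)).val) - (i.val : ℤ))
    rw [h0]
    exact (hbd i.val).2

theorem stmt_16 (r k : ℕ) (hr : 3 ≤ r) (hrk : r ≤ 2 * k)
    (f g : ZMod (2 * r) → ZMod (2 * k + 1))
    (hf : IsHom (CycAdj (2 * r)) (CycAdj (2 * k + 1)) f)
    (hg : IsHom (CycAdj (2 * r)) (CycAdj (2 * k + 1)) g) :
    Relation.ReflTransGen (Step (CycAdj (2 * r)) (CycAdj (2 * k + 1))) f g := by
  have hk : 2 ≤ k := by omega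
  haveI : NeZero (2*r) := ⟨by omega⟩
  have hzig := zig_step r hr
  -- helper: any hom is connected to the canonical zigzag projection
  have main : ∀ h : ZMod (2*r) → ZMod (2*k+1), IsHom (CycAdj (2*r)) (CycAdj (2*k+1)) h →
      Relation.ReflTransGen (Step (CycAdj (2*r)) (CycAdj (2*k+1))) h (projF r k (Zig r)) := by
    intro h hh
    obtain ⟨F, hF, hFf, hFpar⟩ := lift_exists hr hrk h hh
    rcases Int.even_or_odd (F 0) with hev | hod
    · -- target Zig r
      have hpar : ∀ i, (2:ℤ) ∣ (F i - Zig r i) := by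
        intro i
        have h1 := hFpar i
        have h2 := zig_par r i
        obtain ⟨a, ha⟩ := hev
        omega
      have := connect (k := k) hr hk _ F (Zig r) hF hzig hpar rfl
      rwa [hFf] at this
    · -- target Zig r + (2k+1)
      set T : ZMod (2*r) → ℤ := fun i => Zig r i + (2*(k:ℤ)+1) with hTdef
      have hTstep : IsStepF r T := by
        intro i
        have := hzig i
        simp only [hTdef]
        omega
      have hTproj : projF r k T = projF r k (Zig r) := by
        funext i
        show ((Zig r i + (2*(k:ℤ)+1) : ℤ) : ZMod (2*k+1)) = ((Zig r i : ℤ) : ZMod (2*k+1))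
        have hz : ((2*(k:ℤ)+1 : ℤ) : ZMod (2*k+1)) = 0 := by
          have h0 := ZMod.natCast_self (2*k+1)
          have he : ((2*(k:ℤ)+1 : ℤ) : ZMod (2*k+1)) = ((2*k+1 : ℕ) : ZMod (2*k+1)) := by
            push_cast
            ring
          rw [he, h0]
        rw [Int.cast_add, hz, add_zero]
      have hpar : ∀ i, (2:ℤ) ∣ (F i - T i) := by
        intro i
        have h1 := hFpar i
        have h2 := zig_par r i
        obtain ⟨a, ha⟩ := hod
        simp only [hTdef]
        omega
      have := connect (k := k) hr hk _ F T hF hTstep hpar rfl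
      rw [hFf, hTproj] at this
      exact this
  have hsymm : Symmetric (Step (CycAdj (2*r)) (CycAdj (2*k+1))) := by
    intro a b hab
    obtain ⟨h1, h2, v, hne, hrest⟩ := hab
    exact ⟨h2, h1, v, hne.symm, fun u hu => (hrest u hu).symm⟩
  exact (main f hf).trans ((@Relation.ReflTransGen.symmetric _ _ ⟨hsymm⟩).symm _ _ (main g hg))
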